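/- Let U ⊆ ω₁² be an open set (in the product of the order topology on ω₁ with itself) containing the diagonal Δ = {(x,x) : x ∈ ω₁}. Then there exists β < ω₁ such that for all γ with β < γ < ω₁, the pair (β+1, γ) belongs to U ∘ U, where U ∘ U = {(a,c) : ∃b, (a,b) ∈ U ∧ (b,c) ∈ U}. In particular, the set (U ∘ U)[β+1] = {γ : (β+1, γ) ∈ U ∘ U} contains the tail [β+1, ω₁). -/

import Mathlib

open Ordinal in
/-- The first uncountable ordinal, as a type. -/
def Omega1 : Type 1 := {o : Ordinal // o < ω₁}

noncomputable instance : LinearOrder Omega1 := Subtype.instLinearOrder _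

noncomputable instance : TopologicalSpace Omega1 := Preorder.topology Omega1

instance : OrderTopology Omega1 := ⟨rfl⟩

open scoped Ordinal

lemma Omega1.lt_iff {a b : Omega1} : a < b ↔ a.1 < b.1 :=
  @Subtype.coe_lt_coe Ordinal _ _ a b |>.symm

lemma Omega1.le_iff {a b : Omega1} : a ≤ b ↔ a.1 ≤ b.1 :=
  @Subtype.coe_le_coe Ordinal _ _ a b |>.symm

lemma Omega1.isLimit_omega1 : Order.IsSuccLimit (ω₁ : Ordinal) := by
  exact Cardinal.isSuccLimit_omega 1

/-- Step A: shrink an open nbhd of (l,l) to a product of half-open intervals. -/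
lemma Omega1.nbhd (U : Set (Omega1 × Omega1)) (hU : IsOpen U)
    (l : Omega1) (hl : (0 : Ordinal) < l.1) (hmem : (l, l) ∈ U) :
    ∃ b : Omega1, b < l ∧
      ∀ x y : Omega1, b < x → x ≤ l → b < y → y ≤ l → (x, y) ∈ U := by
  have h := hU.mem_nhds hmem
  rw [mem_nhds_prod_iff] at h
  obtain ⟨u, hu, v, hv, huv⟩ := h
  have hex : ∃ m : Omega1, m < l :=
    ⟨⟨0, lt_trans hl l.2⟩, Omega1.lt_iff.2 hl⟩
  obtain ⟨b₁, hb₁, hI₁⟩ := exists_Ioc_subset_of_mem_nhds hu hex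
  obtain ⟨b₂, hb₂, hI₂⟩ := exists_Ioc_subset_of_mem_nhds hv hex
  refine ⟨max b₁ b₂, max_lt hb₁ hb₂, fun x y hx hxl hy hyl => ?_⟩
  exact huv ⟨hI₁ ⟨lt_of_le_of_lt (le_max_left _ _) hx, hxl⟩,
             hI₂ ⟨lt_of_le_of_lt (le_max_right _ _) hy, hyl⟩⟩

theorem stmt_17 (U : Set (Omega1 × Omega1)) (hU : IsOpen U)
    (hdiag : ∀ x : Omega1, (x, x) ∈ U) :
    ∃ β βs : Omega1, βs.1 = β.1 + 1 ∧
      ∀ γ : Omega1, β < γ → ∃ b : Omega1, (βs, b) ∈ U ∧ (b, γ) ∈ U := by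
  classical
  have hlim := Omega1.isLimit_omega1
  -- choose a "pressing down"-type function F
  have hF0 : ∀ l : Omega1, ∃ b : Omega1, (0 : Ordinal) < l.1 →
      b < l ∧ ∀ x y : Omega1, b < x → x ≤ l → b < y → y ≤ l → (x, y) ∈ U := by
    intro l
    by_cases h : (0 : Ordinal) < l.1
    · obtain ⟨b, hb⟩ := Omega1.nbhd U hU l h (hdiag l)
      exact ⟨b, fun _ => hb⟩
    · exact ⟨l, fun h' => absurd h' h⟩
  choose F hF using hF0
  -- Key: some sub-level set of F is unbounded
  have key : ∃ β : Omega1, ∀ B : Omega1, ∃ l : Omega1, B ≤ l ∧ F l ≤ β := by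
    by_contra hc
    push_neg at hc
    -- hc : ∀ β, ∃ B, ∀ l, B ≤ l → β < F l
    choose H hH using hc
    have hH' : ∀ β l : Omega1, F l ≤ β → l < H β := by
      intro β l h
      by_contra h'
      exact absurd h (not_le_of_gt (hH β l (le_of_not_gt h')))
    have h1 : (1 : Ordinal) < ω₁ :=
      lt_trans Ordinal.one_lt_omega0 Ordinal.omega0_lt_omega_one
    set g : ℕ → Omega1 := fun n => Nat.rec ⟨1, h1⟩ (fun _ p => H p) n with hg
    have hσlt : (⨆ n, (g n).1) < ω₁ :=
      Ordinal.iSup_lt_omega_one (fun n => (g n).2)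
    set σ : Omega1 := ⟨⨆ n, (g n).1, hσlt⟩ with hσ
    have hσpos : (0 : Ordinal) < σ.1 :=
      lt_of_lt_of_le zero_lt_one (le_trans (le_of_eq rfl) (le_ciSup (f := fun n => (g n).1)
        (Ordinal.bddAbove_range _) 0))
    obtain ⟨hFσ, -⟩ := hF σ hσpos
    have : ∃ n, (F σ).1 < (g n).1 := by
      rw [← Ordinal.lt_iSup_iff]
      exact Omega1.lt_iff.1 hFσ
    obtain ⟨n, hn⟩ := this
    have hlt : σ < H (g n) := hH' (g n) σ (Omega1.le_iff.2 (le_of_lt hn))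
    have hle : (H (g n)).1 ≤ σ.1 := le_ciSup (f := fun n => (g n).1)
      (Ordinal.bddAbove_range _) (n + 1)
    exact absurd (Omega1.lt_iff.1 hlt) (not_lt_of_ge hle)
  obtain ⟨β, hβ⟩ := key
  refine ⟨β, ⟨β.1 + 1, by rw [Ordinal.add_one_eq_succ]; exact hlim.succ_lt β.2⟩, rfl, ?_⟩
  intro γ hγ
  obtain ⟨l, hγl, hFl⟩ := hβ γ
  have hβl : β.1 < l.1 := lt_of_lt_of_le (Omega1.lt_iff.1 hγ) (Omega1.le_iff.1 hγl)
  have hlpos : (0 : Ordinal) < l.1 := lt_of_le_of_lt (zero_le (a := β.1)) hβl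
  obtain ⟨hFlt, hprop⟩ := hF l hlpos
  refine ⟨l, ?_, ?_⟩
  · refine hprop _ l ?_ ?_ hFlt le_rfl
    · exact lt_of_le_of_lt hFl (Omega1.lt_iff.2 (by
        simp only [Ordinal.add_one_eq_succ]; exact Order.lt_succ β.1))
    · exact Omega1.le_iff.2 (by
        simp only [Ordinal.add_one_eq_succ]; exact Order.succ_le_of_lt hβl)
  · exact hprop l γ hFlt le_rfl
      (lt_of_le_of_lt hFl hγ) hγl
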